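/- Let β > 0, μ > 0, γ > 0, p ∈ (0,1), δ = β/(γ+μ), and let A > 0, S0, S1 satisfy S0 = 1/(δ(γ/μ+1)A + 1), S1 = (1-p)δ(γ/μ+1)A/(δ(γ/μ+1)A + 1)², and pS0 + S1 = 1/δ. Then the characteristic polynomial of the 3×3 Jacobian matrix J = [[-βA - μ, 0, -βS0],[(1-p)βA, -βA - μ, (1-p)βS0 - βS1],[pβA, βA, β(pS0 + S1) - γ - μ]] is λ³ + a₂λ² + a₁λ + a₀ with a₀ = βμ((1 - 1/δ)(βA + μ) + (1-p)μ(μ/(βA + μ) - 2)), a₁ = (βA + μ)² + (p - 1/δ)βμ, and a₂ = 2(βA + μ). -/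

import Mathlib

open Polynomial

lemma charpoly_fin3 (M : Matrix (Fin 3) (Fin 3) ℝ) :
    M.charpoly = X ^ 3 + C (-(M 0 0 + M 1 1 + M 2 2)) * X ^ 2
      + C (M 0 0 * M 1 1 + M 0 0 * M 2 2 + M 1 1 * M 2 2
          - M 0 1 * M 1 0 - M 0 2 * M 2 0 - M 1 2 * M 2 1) * X
      + C (-(M 0 0 * M 1 1 * M 2 2 - M 0 0 * M 1 2 * M 2 1 - M 0 1 * M 1 0 * M 2 2
          + M 0 1 * M 1 2 * M 2 0 + M 0 2 * M 1 0 * M 2 1 - M 0 2 * M 1 1 * M 2 0)) := by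
  rw [Matrix.charpoly, Matrix.det_fin_three]
  simp only [Matrix.charmatrix_apply_eq,
    Matrix.charmatrix_apply_ne M 0 1 (by decide),
    Matrix.charmatrix_apply_ne M 0 2 (by decide),
    Matrix.charmatrix_apply_ne M 1 0 (by decide),
    Matrix.charmatrix_apply_ne M 1 2 (by decide),
    Matrix.charmatrix_apply_ne M 2 0 (by decide),
    Matrix.charmatrix_apply_ne M 2 1 (by decide),
    map_add, map_mul, map_neg, map_sub]
  ring

theorem stmt_13 (β μ γ p δ S0 S1 A : ℝ) (hβ : 0 < β) (hμ : 0 < μ) (hγ : 0 < γ)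
    (hp : p ∈ Set.Ioo (0:ℝ) 1) (hδ : δ = β / (γ + μ)) (hA : 0 < A)
    (hS0 : S0 = 1 / (δ * (γ / μ + 1) * A + 1))
    (hS1 : S1 = (1 - p) * δ * (γ / μ + 1) * A / (δ * (γ / μ + 1) * A + 1) ^ 2)
    (heq : p * S0 + S1 = 1 / δ) :
    let J : Matrix (Fin 3) (Fin 3) ℝ :=
      !![-β * A - μ, 0, -β * S0;
         (1 - p) * β * A, -β * A - μ, (1 - p) * β * S0 - β * S1;
         p * β * A, β * A, β * (p * S0 + S1) - γ - μ]
    let a₀ : ℝ := β * μ * ((1 - 1 / δ) * (β * A + μ) + (1 - p) * μ * (μ / (β * A + μ) - 2))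
    let a₁ : ℝ := (β * A + μ) ^ 2 + (p - 1 / δ) * β * μ
    let a₂ : ℝ := 2 * (β * A + μ)
    J.charpoly = X ^ 3 + C a₂ * X ^ 2 + C a₁ * X + C a₀ := by
  intro J a₀ a₁ a₂
  have hγμ : (0:ℝ) < γ + μ := by linarith
  have hb : (0:ℝ) < β * A + μ := by positivity
  have hbne : β * A + μ ≠ 0 := ne_of_gt hb
  have hβne : β ≠ 0 := ne_of_gt hβ
  have hμne : μ ≠ 0 := ne_of_gt hμ
  have hγμne : γ + μ ≠ 0 := ne_of_gt hγμ
  have hδpos : 0 < δ := by rw [hδ]; positivity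
  have hδne : δ ≠ 0 := ne_of_gt hδpos
  have hS0' : S0 = μ / (β * A + μ) := by
    rw [hS0, hδ]; rw [div_eq_div_iff (by positivity) hbne]; field_simp
  have hS1' : S1 = (1 - p) * β * A * μ / (β * A + μ) ^ 2 := by
    rw [hS1, hδ]; rw [div_eq_div_iff (by positivity) (by positivity)]; field_simp
  have hinv : 1 / δ = (γ + μ) / β := by rw [hδ]; field_simp
  have h : (p * μ * (β * A + μ) ^ 2 + (1 - p) * β * A * μ * (β * A + μ)) * β
      = (γ + μ) * ((β * A + μ) * (β * A + μ) ^ 2) := by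
    have h0 := heq
    rw [hS0', hS1', hinv] at h0
    field_simp at h0
    linear_combination (β * A + μ) * h0
  have hkey : β * μ * (β * A + μ - (1 - p) * μ) = (γ + μ) * (β * A + μ) ^ 2 := by
    have h2 : (β * A + μ) * (β * μ * (β * A + μ - (1 - p) * μ))
        = (β * A + μ) * ((γ + μ) * (β * A + μ) ^ 2) := by linear_combination h
    exact mul_left_cancel₀ hbne h2
  have hγ3 : γ = β * μ * (β * A + μ - (1 - p) * μ) / (β * A + μ) ^ 2 - μ := by
    rw [eq_sub_iff_add_eq, eq_div_iff (pow_ne_zero 2 hbne)]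
    linear_combination -hkey
  have e2 : -((-β * A - μ) + (-β * A - μ) + (β * (p * S0 + S1) - γ - μ)) = a₂ := by
    show _ = 2 * (β * A + μ)
    rw [heq, hinv]
    field_simp
    ring
  have e1 : (-β * A - μ) * (-β * A - μ) + (-β * A - μ) * (β * (p * S0 + S1) - γ - μ)
      + (-β * A - μ) * (β * (p * S0 + S1) - γ - μ)
      - 0 * ((1 - p) * β * A) - (-β * S0) * (p * β * A)
      - ((1 - p) * β * S0 - β * S1) * (β * A) = a₁ := by
    show _ = (β * A + μ) ^ 2 + (p - 1 / δ) * β * μ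
    rw [heq, hinv, hS0', hS1', hγ3]
    field_simp
    ring
  have e0 : -((-β * A - μ) * (-β * A - μ) * (β * (p * S0 + S1) - γ - μ)
      - (-β * A - μ) * ((1 - p) * β * S0 - β * S1) * (β * A)
      - 0 * ((1 - p) * β * A) * (β * (p * S0 + S1) - γ - μ)
      + 0 * ((1 - p) * β * S0 - β * S1) * (p * β * A)
      + (-β * S0) * ((1 - p) * β * A) * (β * A)
      - (-β * S0) * (-β * A - μ) * (p * β * A)) = a₀ := by
    show _ = β * μ * ((1 - 1 / δ) * (β * A + μ) + (1 - p) * μ * (μ / (β * A + μ) - 2))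
    rw [heq, hinv, hS0', hS1', hγ3]
    field_simp
    ring
  rw [show J.charpoly = (!![-β * A - μ, 0, -β * S0;
         (1 - p) * β * A, -β * A - μ, (1 - p) * β * S0 - β * S1;
         p * β * A, β * A, β * (p * S0 + S1) - γ - μ] : Matrix (Fin 3) (Fin 3) ℝ).charpoly from rfl,
     charpoly_fin3]
  show X ^ 3
      + C (-((-β * A - μ) + (-β * A - μ) + (β * (p * S0 + S1) - γ - μ))) * X ^ 2
      + C ((-β * A - μ) * (-β * A - μ) + (-β * A - μ) * (β * (p * S0 + S1) - γ - μ)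
          + (-β * A - μ) * (β * (p * S0 + S1) - γ - μ)
          - 0 * ((1 - p) * β * A) - (-β * S0) * (p * β * A)
          - ((1 - p) * β * S0 - β * S1) * (β * A)) * X
      + C (-((-β * A - μ) * (-β * A - μ) * (β * (p * S0 + S1) - γ - μ)
          - (-β * A - μ) * ((1 - p) * β * S0 - β * S1) * (β * A)
          - 0 * ((1 - p) * β * A) * (β * (p * S0 + S1) - γ - μ)
          + 0 * ((1 - p) * β * S0 - β * S1) * (p * β * A)
          + (-β * S0) * ((1 - p) * β * A) * (β * A)
          - (-β * S0) * (-β * A - μ) * (p * β * A)))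
      = X ^ 3 + C a₂ * X ^ 2 + C a₁ * X + C a₀
  rw [e2, e1, e0]
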